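/- (Proposition 1) Fix integers K ≥ 1 and U with 1 ≤ U ≤ K. There exist functions M : ℕ → ℝ → ℝ and L : ℕ → ℝ such that: (i) for every n ≥ 1 and every α₁ > 0, Pr(K⁺ = U | K, n, α₁, α₂) tends to M n α₁ as α₂ → 0⁺; (ii) for every n ≥ 1, M n α₁ tends to L n as α₁ → ∞; and (iii) L n tends to 1 as n → ∞. That is, the iterated limit lim_{n→∞} lim_{α₁→∞} lim_{α₂→0⁺} Pr(K⁺ = U | K, n, α₁, α₂) equals 1. -/
import Mathlib


open Filter Topology Finset

/-- Number of indices `i` with `z i = k`. -/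
def nk {n K : ℕ} (z : Fin n → Fin K) (k : Fin K) : ℕ :=
  (Finset.univ.filter (fun i => z i = k)).card

/-- Number of occupied components (distinct values taken by `z`). -/
def Kplus {n K : ℕ} (z : Fin n → Fin K) : ℕ :=
  (Finset.univ.image z).card

/-- Marginal allocation probability under an asymmetric Dirichlet(α₁ on first U
coordinates, α₂ on the rest) prior on the mixture weights. -/
noncomputable def pz (K U n : ℕ) (α₁ α₂ : ℝ) (z : Fin n → Fin K) : ℝ :=
  (Real.Gamma ((U : ℝ) * α₁ + ((K : ℝ) - (U : ℝ)) * α₂) /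
      Real.Gamma ((U : ℝ) * α₁ + ((K : ℝ) - (U : ℝ)) * α₂ + (n : ℝ))) *
    ∏ k : Fin K,
      Real.Gamma ((if (k : ℕ) < U then α₁ else α₂) + (nk z k : ℝ)) /
        Real.Gamma (if (k : ℕ) < U then α₁ else α₂)

/-- Prior probability that the number of occupied components equals `u`. -/
noncomputable def prKplus (K U n : ℕ) (α₁ α₂ : ℝ) (u : ℕ) : ℝ :=
  ∑ z ∈ Finset.univ.filter (fun z : Fin n → Fin K => Kplus z = u),
    pz K U n α₁ α₂ z

/-! ### Auxiliary material -/

lemma Gamma_add_nat' (x : ℝ) (hx : 0 < x) (m : ℕ) :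
    Real.Gamma (x + m) = Real.Gamma x * ∏ j ∈ Finset.range m, (x + j) := by
  induction m with
  | zero => simp
  | succ m ih =>
    have h1 : (x + (m:ℝ)) ≠ 0 := by positivity
    have h2 : x + ((m+1 : ℕ) : ℝ) = (x + m) + 1 := by push_cast; ring
    rw [h2, Real.Gamma_add_one h1, ih, Finset.prod_range_succ]
    ring

/-- Numerator polynomial. -/
noncomputable def Nf (U : ℕ) {K n : ℕ} (a b : ℝ) (z : Fin n → Fin K) : ℝ :=
  ∏ k : Fin K, ∏ j ∈ Finset.range (nk z k), ((if (k:ℕ) < U then a else b) + j)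

/-- Denominator polynomial. -/
noncomputable def Df (K U n : ℕ) (a b : ℝ) : ℝ :=
  ∏ j ∈ Finset.range n, ((U:ℝ) * a + ((K:ℝ) - U) * b + j)

lemma sum_nk {n K : ℕ} (z : Fin n → Fin K) : ∑ k, nk z k = n := by
  classical
  have := Finset.card_eq_sum_card_fiberwise (f := z) (s := (Finset.univ : Finset (Fin n)))
    (t := Finset.univ) (by simp)
  simpa [nk] using this.symm

lemma pz_eq (K U n : ℕ) (hU1 : 1 ≤ U) (hUK : U ≤ K) (a b : ℝ) (ha : 0 < a) (hb : 0 < b)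
    (z : Fin n → Fin K) :
    pz K U n a b z = Nf U a b z / Df K U n a b := by
  have hU : (1:ℝ) ≤ (U:ℝ) := by exact_mod_cast hU1
  have hKU : (0:ℝ) ≤ (K:ℝ) - U := by
    have : (U:ℝ) ≤ K := by exact_mod_cast hUK
    linarith
  have hA : 0 < (U:ℝ) * a + ((K:ℝ) - U) * b := by nlinarith
  have hGA : Real.Gamma ((U:ℝ) * a + ((K:ℝ) - U) * b) ≠ 0 :=
    (Real.Gamma_pos_of_pos hA).ne'
  have hfrac : Real.Gamma ((U : ℝ) * a + ((K : ℝ) - (U : ℝ)) * b) /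
      Real.Gamma ((U : ℝ) * a + ((K : ℝ) - (U : ℝ)) * b + (n : ℝ)) =
      1 / Df K U n a b := by
    rw [Gamma_add_nat' _ hA n, Df]
    rw [div_mul_eq_div_div, div_self hGA]
  have hprod : ∀ k : Fin K,
      Real.Gamma ((if (k : ℕ) < U then a else b) + (nk z k : ℝ)) /
        Real.Gamma (if (k : ℕ) < U then a else b) =
      ∏ j ∈ Finset.range (nk z k), ((if (k:ℕ) < U then a else b) + j) := by
    intro k
    have hak : 0 < (if (k:ℕ) < U then a else b) := by split_ifs <;> assumption
    rw [Gamma_add_nat' _ hak, mul_comm, mul_div_assoc, div_self (Real.Gamma_pos_of_pos hak).ne',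
      mul_one]
  rw [pz, hfrac, Nf]
  rw [Finset.prod_congr rfl (fun k _ => hprod k)]
  ring

lemma Nf_bad {K U n : ℕ} (z : Fin n → Fin K) (hbad : ¬ ∀ i, (z i : ℕ) < U) (a : ℝ) :
    Nf U a 0 z = 0 := by
  push_neg at hbad
  obtain ⟨i, hi⟩ := hbad
  rw [Nf]
  apply Finset.prod_eq_zero (Finset.mem_univ (z i))
  have hcard : 0 < nk z (z i) := by
    rw [nk, Finset.card_pos]
    exact ⟨i, by simp⟩
  apply Finset.prod_eq_zero (Finset.mem_range.2 hcard)
  simp [not_lt.2 hi]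

lemma good_nk {K U n : ℕ} (z : Fin n → Fin K) (hg : ∀ i, (z i : ℕ) < U) (k : Fin K)
    (hk : ¬ (k:ℕ) < U) : nk z k = 0 := by
  rw [nk, Finset.card_eq_zero, Finset.filter_eq_empty_iff]
  intro i _
  intro h
  exact hk (h ▸ hg i)

lemma aux_ratio_one (j : ℝ) : Tendsto (fun a : ℝ => (a + j) / a) atTop (𝓝 1) := by
  have h : Tendsto (fun a : ℝ => 1 + j / a) atTop (𝓝 (1 + 0)) :=
    tendsto_const_nhds.add (tendsto_const_nhds.div_atTop tendsto_id)
  rw [add_zero] at h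
  refine h.congr' ?_
  filter_upwards [eventually_gt_atTop (0:ℝ)] with a ha
  field_simp

lemma aux_ratio_U (U : ℕ) (j : ℝ) :
    Tendsto (fun a : ℝ => ((U:ℝ) * a + j) / a) atTop (𝓝 U) := by
  have h : Tendsto (fun a : ℝ => (U:ℝ) + j / a) atTop (𝓝 ((U:ℝ) + 0)) :=
    tendsto_const_nhds.add (tendsto_const_nhds.div_atTop tendsto_id)
  rw [add_zero] at h
  refine h.congr' ?_
  filter_upwards [eventually_gt_atTop (0:ℝ)] with a ha
  field_simp

lemma tendsto_term (K U n : ℕ) (hU1 : 1 ≤ U) (z : Fin n → Fin K)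
    (hg : ∀ i, (z i : ℕ) < U) :
    Tendsto (fun a : ℝ => Nf U a 0 z / Df K U n a 0) atTop (𝓝 (((U:ℝ)^n)⁻¹)) := by
  have hN : ∀ a : ℝ, Nf U a 0 z = ∏ k : Fin K, ∏ j ∈ Finset.range (nk z k), (a + (j:ℝ)) := by
    intro a
    rw [Nf]
    refine Finset.prod_congr rfl (fun k _ => ?_)
    by_cases hk : (k:ℕ) < U
    · simp [hk]
    · simp [good_nk z hg k hk]
  have hD : ∀ a : ℝ, Df K U n a 0 = ∏ j ∈ Finset.range n, ((U:ℝ) * a + (j:ℝ)) := by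
    intro a
    rw [Df]
    refine Finset.prod_congr rfl (fun j _ => ?_)
    ring
  have hP : Tendsto (fun a : ℝ => ∏ k : Fin K, ∏ j ∈ Finset.range (nk z k), ((a + (j:ℝ))/a))
      atTop (𝓝 1) := by
    have h := tendsto_finset_prod (Finset.univ : Finset (Fin K))
      (f := fun k (a:ℝ) => ∏ j ∈ Finset.range (nk z k), ((a + (j:ℝ))/a))
      (a := fun _ => (1:ℝ)) (fun k _ => by
        have := tendsto_finset_prod (Finset.range (nk z k))
          (f := fun (j:ℕ) (a:ℝ) => ((a + (j:ℝ))/a)) (a := fun _ => (1:ℝ))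
          (fun j _ => aux_ratio_one j)
        simpa using this)
    simpa using h
  have hQ : Tendsto (fun a : ℝ => ∏ j ∈ Finset.range n, (((U:ℝ) * a + (j:ℝ))/a))
      atTop (𝓝 ((U:ℝ)^n)) := by
    have := tendsto_finset_prod (Finset.range n)
      (f := fun (j:ℕ) (a:ℝ) => (((U:ℝ) * a + (j:ℝ))/a)) (a := fun _ => (U:ℝ))
      (fun j _ => aux_ratio_U U j)
    simpa using this
  have hU0 : (0:ℝ) < (U:ℝ) := by exact_mod_cast hU1
  have hUpow : ((U:ℝ)^n) ≠ 0 := by positivity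
  have hdiv := hP.div hQ hUpow
  rw [one_div] at hdiv
  refine hdiv.congr' ?_
  filter_upwards [eventually_gt_atTop (0:ℝ)] with a ha
  have han : a ^ n ≠ 0 := by positivity
  have e1 : (∏ k : Fin K, ∏ j ∈ Finset.range (nk z k), ((a + (j:ℝ))/a))
      = (∏ k : Fin K, ∏ j ∈ Finset.range (nk z k), (a + (j:ℝ))) / a ^ n := by
    rw [Finset.prod_congr rfl (fun k _ => Finset.prod_div_distrib
      (f := fun j : ℕ => (a + (j:ℝ))) (g := fun _ => a)), Finset.prod_div_distrib]
    congr 1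
    simp only [Finset.prod_const, Finset.card_range]
    rw [Finset.prod_pow_eq_pow_sum, sum_nk]
  have e2 : (∏ j ∈ Finset.range n, (((U:ℝ) * a + (j:ℝ))/a))
      = (∏ j ∈ Finset.range n, ((U:ℝ) * a + (j:ℝ))) / a ^ n := by
    rw [Finset.prod_div_distrib]
    simp [Finset.prod_const, Finset.card_range]
  simp only [Pi.div_apply, e1, e2, hN, hD]
  rw [div_div_div_cancel_right₀ han]

lemma tendsto_pz_b (K U n : ℕ) (hU1 : 1 ≤ U) (a : ℝ) (ha : 0 < a) (z : Fin n → Fin K) :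
    Tendsto (fun b : ℝ => Nf U a b z / Df K U n a b) (𝓝[>] 0)
      (𝓝 (Nf U a 0 z / Df K U n a 0)) := by
  have hU0 : (0:ℝ) < (U:ℝ) := by exact_mod_cast hU1
  have hNc : Continuous (fun b : ℝ => Nf U a b z) := by
    unfold Nf
    apply continuous_finset_prod
    intro k _
    apply continuous_finset_prod
    intro j _
    by_cases h : (k:ℕ) < U
    · simp only [if_pos h]; exact continuous_const
    · simp only [if_neg h]; exact continuous_id.add continuous_const
  have hDc : Continuous (fun b : ℝ => Df K U n a b) := by
    unfold Df
    apply continuous_finset_prod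
    intro j _
    fun_prop
  have hD0 : Df K U n a 0 ≠ 0 := by
    unfold Df
    apply ne_of_gt
    apply Finset.prod_pos
    intro j _
    have h1 : (0:ℝ) ≤ (j:ℝ) := Nat.cast_nonneg j
    have h2 : (0:ℝ) < (U:ℝ) * a := mul_pos hU0 ha
    nlinarith
  exact ((hNc.tendsto 0).div (hDc.tendsto 0) hD0).mono_left nhdsWithin_le_nhds

lemma card_goodsurj (K U : ℕ) (hU1 : 1 ≤ U) (hUK : U ≤ K) (n : ℕ) :
    (Finset.univ.filter (fun z : Fin n → Fin K => Kplus z = U ∧ ∀ i, (z i:ℕ) < U)).card ≤ U^n ∧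
    U^n ≤ (Finset.univ.filter
        (fun z : Fin n → Fin K => Kplus z = U ∧ ∀ i, (z i:ℕ) < U)).card + U * (U-1)^n := by
  classical
  set T0 := Finset.univ.filter (fun k : Fin K => (k:ℕ) < U) with hT0
  have hT0eq : T0 = Finset.image (Fin.castLE hUK) Finset.univ := by
    ext k
    simp only [hT0, Finset.mem_filter, Finset.mem_univ, true_and, Finset.mem_image]
    constructor
    · intro h
      exact ⟨⟨(k:ℕ), h⟩, Fin.ext (by simp)⟩
    · rintro ⟨j, rfl⟩
      simp
  have hcardT0 : T0.card = U := by
    rw [hT0eq, Finset.card_image_of_injective _ (Fin.castLE_injective hUK)]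
    simp
  set PiS := Fintype.piFinset (fun _ : Fin n => T0) with hPiS
  have hPicard : PiS.card = U^n := by
    rw [hPiS, Fintype.card_piFinset]
    simp [hcardT0]
  set G := Finset.univ.filter
      (fun z : Fin n → Fin K => Kplus z = U ∧ ∀ i, (z i:ℕ) < U) with hG
  have hGP : G ⊆ PiS := by
    intro z hz
    rw [hG, Finset.mem_filter] at hz
    rw [hPiS, Fintype.mem_piFinset]
    intro i
    rw [hT0]
    simp [hz.2.2 i]
  have hsub : PiS \ G ⊆ T0.biUnion (fun k => Fintype.piFinset (fun _ : Fin n => T0.erase k)) := by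
    intro z hz
    rw [Finset.mem_sdiff] at hz
    obtain ⟨hzPi, hzG⟩ := hz
    have hzT : ∀ i, z i ∈ T0 := Fintype.mem_piFinset.1 hzPi
    have hzlt : ∀ i, (z i:ℕ) < U := fun i => by
      have := hzT i; rw [hT0, Finset.mem_filter] at this; exact this.2
    have hKp : Kplus z ≠ U := by
      intro h
      exact hzG (Finset.mem_filter.2 ⟨Finset.mem_univ _, h, hzlt⟩)
    have himg : Finset.univ.image z ⊆ T0 := by
      intro k hk
      obtain ⟨i, _, rfl⟩ := Finset.mem_image.1 hk
      exact hzT i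
    have hlt : (Finset.univ.image z).card < T0.card :=
      lt_of_le_of_ne (Finset.card_le_card himg) (by rw [hcardT0]; exact hKp)
    have hex : ∃ k ∈ T0, k ∉ Finset.univ.image z := by
      by_contra h
      push_neg at h
      have := Finset.card_le_card h
      omega
    obtain ⟨k, hkT, hknot⟩ := hex
    refine Finset.mem_biUnion.2 ⟨k, hkT, Fintype.mem_piFinset.2 (fun i => Finset.mem_erase.2
      ⟨?_, hzT i⟩)⟩
    intro h
    exact hknot (h ▸ Finset.mem_image_of_mem z (Finset.mem_univ i))
  have hbadcard : (PiS \ G).card ≤ U * (U-1)^n := by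
    calc (PiS \ G).card ≤ (T0.biUnion (fun k => Fintype.piFinset
          (fun _ : Fin n => T0.erase k))).card := Finset.card_le_card hsub
      _ ≤ ∑ k ∈ T0, (Fintype.piFinset (fun _ : Fin n => T0.erase k)).card :=
          Finset.card_biUnion_le
      _ = ∑ _k ∈ T0, (U-1)^n := by
          refine Finset.sum_congr rfl fun k hk => ?_
          rw [Fintype.card_piFinset]
          simp [Finset.card_erase_of_mem hk, hcardT0]
      _ = U * (U-1)^n := by rw [Finset.sum_const, hcardT0, smul_eq_mul]
  constructor
  · calc G.card ≤ PiS.card := Finset.card_le_card hGP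
      _ = U^n := hPicard
  · have h := Finset.card_sdiff_add_card_eq_card hGP
    omega

theorem stmt_0 (K U : ℕ) (hK : 1 ≤ K) (hU1 : 1 ≤ U) (hUK : U ≤ K) :
    ∃ (M : ℕ → ℝ → ℝ) (L : ℕ → ℝ),
      (∀ n, 1 ≤ n → ∀ α₁ : ℝ, 0 < α₁ →
        Tendsto (fun α₂ : ℝ => prKplus K U n α₁ α₂ U) (𝓝[>] 0) (𝓝 (M n α₁))) ∧
      (∀ n, 1 ≤ n → Tendsto (fun α₁ : ℝ => M n α₁) atTop (𝓝 (L n))) ∧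
      Tendsto L atTop (𝓝 1) := by
  classical
  refine ⟨fun n a => ∑ z ∈ Finset.univ.filter (fun z : Fin n → Fin K => Kplus z = U),
      Nf U a 0 z / Df K U n a 0,
    fun n => (((Finset.univ.filter
      (fun z : Fin n → Fin K => Kplus z = U ∧ ∀ i, (z i:ℕ) < U)).card : ℝ) * ((U:ℝ)^n)⁻¹),
    ?_, ?_, ?_⟩
  · -- part (i)
    intro n hn a ha
    have h1 : Tendsto (fun b : ℝ => ∑ z ∈ Finset.univ.filter
        (fun z : Fin n → Fin K => Kplus z = U), Nf U a b z / Df K U n a b) (𝓝[>] 0)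
        (𝓝 (∑ z ∈ Finset.univ.filter (fun z : Fin n → Fin K => Kplus z = U),
          Nf U a 0 z / Df K U n a 0)) :=
      tendsto_finset_sum _ (fun z _ => tendsto_pz_b K U n hU1 a ha z)
    refine h1.congr' ?_
    filter_upwards [self_mem_nhdsWithin] with b hb
    rw [prKplus]
    exact (Finset.sum_congr rfl fun z _ =>
      pz_eq K U n hU1 hUK a b ha (Set.mem_Ioi.1 hb) z).symm
  · -- part (ii)
    intro n hn
    set G := Finset.univ.filter
      (fun z : Fin n → Fin K => Kplus z = U ∧ ∀ i, (z i:ℕ) < U) with hG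
    have hsubset : G ⊆ Finset.univ.filter (fun z : Fin n → Fin K => Kplus z = U) := by
      intro z hz
      rw [hG, Finset.mem_filter] at hz
      exact Finset.mem_filter.2 ⟨hz.1, hz.2.1⟩
    have hM : ∀ a : ℝ,
        (∑ z ∈ Finset.univ.filter (fun z : Fin n → Fin K => Kplus z = U),
          Nf U a 0 z / Df K U n a 0) = ∑ z ∈ G, Nf U a 0 z / Df K U n a 0 := by
      intro a
      refine (Finset.sum_subset hsubset ?_).symm
      intro z hz hzG
      rw [Finset.mem_filter] at hz
      have hbad : ¬ ∀ i, (z i:ℕ) < U := by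
        intro hgood
        exact hzG (by rw [hG]; exact Finset.mem_filter.2 ⟨Finset.mem_univ _, hz.2, hgood⟩)
      rw [Nf_bad z hbad, zero_div]
    have h2 : Tendsto (fun a : ℝ => ∑ z ∈ G, Nf U a 0 z / Df K U n a 0) atTop
        (𝓝 (∑ _z ∈ G, ((U:ℝ)^n)⁻¹)) :=
      tendsto_finset_sum _ (fun z hz => tendsto_term K U n hU1 z
        (by rw [hG, Finset.mem_filter] at hz; exact hz.2.2))
    rw [Finset.sum_const, nsmul_eq_mul] at h2
    exact Tendsto.congr (fun a => (hM a).symm) h2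
  · -- part (iii)
    have hU0 : (0:ℝ) < (U:ℝ) := by exact_mod_cast hU1
    have hU1R : (1:ℝ) ≤ (U:ℝ) := by exact_mod_cast hU1
    set r : ℝ := ((U:ℝ) - 1) / U with hr
    have hr0 : 0 ≤ r := by
      apply div_nonneg <;> linarith [hU1R]
    have hr1 : r < 1 := by
      rw [hr, div_lt_one hU0]; linarith
    have hrt : Tendsto (fun n : ℕ => 1 - (U:ℝ) * r^n) atTop (𝓝 1) := by
      have h0 := (tendsto_pow_atTop_nhds_zero_of_lt_one hr0 hr1).const_mul (U:ℝ)
      have h2 := (tendsto_const_nhds (x := (1:ℝ))).sub h0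
      simpa using h2
    refine tendsto_of_tendsto_of_tendsto_of_le_of_le hrt tendsto_const_nhds ?_ ?_
    · intro n
      obtain ⟨hub, hlb⟩ := card_goodsurj K U hU1 hUK n
      have hUpow : (0:ℝ) < (U:ℝ)^n := by positivity
      have hlbR : (U:ℝ)^n - (U:ℝ) * ((U:ℝ)-1)^n ≤ (((Finset.univ.filter
          (fun z : Fin n → Fin K => Kplus z = U ∧ ∀ i, (z i:ℕ) < U)).card : ℝ)) := by
        have hcast := (Nat.cast_le (α := ℝ)).2 hlb
        push_cast [Nat.cast_sub hU1] at hcast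
        linarith
      calc 1 - (U:ℝ)*r^n = ((U:ℝ)^n - (U:ℝ)*((U:ℝ)-1)^n) * ((U:ℝ)^n)⁻¹ := by
            rw [hr, div_pow]
            field_simp
        _ ≤ _ := mul_le_mul_of_nonneg_right hlbR (by positivity)
    · intro n
      obtain ⟨hub, hlb⟩ := card_goodsurj K U hU1 hUK n
      have hUpow : (0:ℝ) < (U:ℝ)^n := by positivity
      have hubR : (((Finset.univ.filter
          (fun z : Fin n → Fin K => Kplus z = U ∧ ∀ i, (z i:ℕ) < U)).card : ℝ)) ≤ (U:ℝ)^n := by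
        have := (Nat.cast_le (α := ℝ)).2 hub
        push_cast at this
        linarith
      calc (((Finset.univ.filter
            (fun z : Fin n → Fin K => Kplus z = U ∧ ∀ i, (z i:ℕ) < U)).card : ℝ)) * ((U:ℝ)^n)⁻¹
          ≤ (U:ℝ)^n * ((U:ℝ)^n)⁻¹ := mul_le_mul_of_nonneg_right hubR (by positivity)
        _ = 1 := mul_inv_cancel₀ hUpow.ne'
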